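/- Let G, G' be finite groups and f : G → G' a function such that Pr_{r₁,r₂∈G}[f(r₁r₂) = f(r₁)f(r₂)] ≥ 9/10, where r₁, r₂ are uniformly random elements of G. Then there exists a group homomorphism φ : G → G' such that Pr_{x∈G}[f(x) ≠ φ(x)] ≤ 1/10, and this homomorphism is unique. -/

import Mathlib

open Finset

namespace BLRtest

variable {α : Type*} [Fintype α]

lemma card_filter_equiv {β : Type*} [Fintype β] (e : α ≃ β) (P : β → Prop) [DecidablePred P] :
    #(univ.filter fun a => P (e a)) = #(univ.filter P) :=
  Finset.card_equiv e (by simp)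

lemma two_bound [DecidableEq α] (P Q : α → Prop) [DecidablePred P] [DecidablePred Q] :
    #(univ.filter P) + #(univ.filter Q) ≤ #(univ.filter fun a => P a ∧ Q a) + Fintype.card α := by
  rw [Finset.filter_and]
  have h1 := Finset.card_union_add_card_inter (univ.filter P) (univ.filter Q)
  have h2 : #(univ.filter P ∪ univ.filter Q) ≤ Fintype.card α := by
    simpa using Finset.card_le_univ (univ.filter P ∪ univ.filter Q)
  omega

lemma three_bound [DecidableEq α] (P Q R : α → Prop) [DecidablePred P] [DecidablePred Q]
    [DecidablePred R] :
    #(univ.filter P) + #(univ.filter Q) + #(univ.filter R) ≤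
      #(univ.filter fun a => P a ∧ Q a ∧ R a) + 2 * Fintype.card α := by
  have h1 := two_bound Q R
  have h2 := two_bound P (fun a => Q a ∧ R a)
  omega

lemma compl_card (P : α → Prop) [DecidablePred P] [DecidablePred fun a => ¬ P a] :
    #(univ.filter P) + #(univ.filter fun a => ¬ P a) = Fintype.card α := by
  classical
  have hdisj : Disjoint (univ.filter P) (univ.filter fun a => ¬ P a) := by
    rw [Finset.disjoint_left]
    intro a ha hb
    simp only [mem_filter] at ha hb
    exact hb.2 ha.2
  have hun : univ.filter P ∪ univ.filter (fun a => ¬ P a) = univ := by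
    ext a
    by_cases h : P a <;> simp [h]
  rw [← Finset.card_union_of_disjoint hdisj, hun, Finset.card_univ]

lemma card_pairs_fst [DecidableEq α] {β : Type*} [DecidableEq β] (g : α → β) :
    #(univ.filter fun p : α × α => g p.1 = g p.2) =
      ∑ y : α, #(univ.filter fun z : α => g z = g y) := by
  rw [Finset.card_eq_sum_card_fiberwise (f := Prod.fst) (t := univ) (fun x _ => mem_univ _)]
  refine Finset.sum_congr rfl fun y _ => ?_
  refine Finset.card_bij' (fun p _ => p.2) (fun z _ => (y, z)) ?_ ?_ ?_ ?_ <;>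
    simp_all [Prod.ext_iff, eq_comm]

lemma card_pairs_left (E : α → Prop) [DecidablePred E] :
    #(univ.filter fun p : α × α => E p.1) = #(univ.filter E) * Fintype.card α := by
  classical
  rw [← Finset.univ_product_univ, Finset.filter_product_left E, Finset.card_product,
    Finset.card_univ]

lemma card_pairs_right (E : α → Prop) [DecidablePred E] :
    #(univ.filter fun p : α × α => E p.2) = Fintype.card α * #(univ.filter E) := by
  classical
  rw [← Finset.univ_product_univ, Finset.filter_product_right E, Finset.card_product,
    Finset.card_univ]

lemma card_pairs_fst_sum [DecidableEq α] (B : Finset α) (Q : α × α → Prop) [DecidablePred Q] :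
    #(univ.filter fun p : α × α => Q p ∧ p.1 ∈ B) =
      ∑ x ∈ B, #(univ.filter fun z => Q (x, z)) := by
  rw [Finset.card_eq_sum_card_fiberwise (f := Prod.fst) (t := B)
    (fun p hp => (mem_filter.mp hp).2.2)]
  refine Finset.sum_congr rfl fun x hx => ?_
  refine Finset.card_bij' (fun p _ => p.2) (fun z _ => (x, z)) ?_ ?_ ?_ ?_
  · rintro ⟨p1, p2⟩ hp
    simp only [mem_filter, mem_univ, true_and] at hp ⊢
    obtain ⟨⟨hq, _⟩, rfl⟩ := hp
    exact hq
  · intro z hz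
    simp only [mem_filter, mem_univ, true_and] at hz ⊢
    exact ⟨⟨hz, hx⟩, trivial⟩
  · rintro ⟨p1, p2⟩ hp
    simp only [mem_filter, mem_univ, true_and] at hp
    obtain ⟨⟨_, _⟩, rfl⟩ := hp
    rfl
  · intro z hz
    rfl

lemma card_pairs_snd_sum [DecidableEq α] (B : Finset α) (Q : α × α → Prop) [DecidablePred Q] :
    #(univ.filter fun p : α × α => Q p ∧ p.2 ∈ B) =
      ∑ y ∈ B, #(univ.filter fun z => Q (z, y)) := by
  rw [Finset.card_eq_sum_card_fiberwise (f := Prod.snd) (t := B)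
    (fun p hp => (mem_filter.mp hp).2.2)]
  refine Finset.sum_congr rfl fun y hy => ?_
  refine Finset.card_bij' (fun p _ => p.1) (fun z _ => (z, y)) ?_ ?_ ?_ ?_
  · rintro ⟨p1, p2⟩ hp
    simp only [mem_filter, mem_univ, true_and] at hp ⊢
    obtain ⟨⟨hq, _⟩, rfl⟩ := hp
    exact hq
  · intro z hz
    simp only [mem_filter, mem_univ, true_and] at hz ⊢
    exact ⟨⟨hz, hy⟩, trivial⟩
  · rintro ⟨p1, p2⟩ hp
    simp only [mem_filter, mem_univ, true_and] at hp
    obtain ⟨⟨_, _⟩, rfl⟩ := hp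
    rfl
  · intro z hz
    rfl

lemma final_arith (n b : ℕ) (h14 : 14 * n * b ≤ 10 * (b * b) + n * n)
    (hp1 : (n + 1) * n ≤ 10 * b * n) (hp2 : 8 * b * b ≤ n * b) (npos : 0 < n) : False := by
  nlinarith

variable {G G' : Type*} [Group G] [Group G'] [Fintype G] [DecidableEq G'] (f : G → G')

/-- fiber count: number of `y` with `f (x*y) (f y)⁻¹ = a` -/
def Nf (x : G) (a : G') : ℕ := #(univ.filter fun y => f (x * y) * (f y)⁻¹ = a)

lemma fiber_disjoint (g : G → G') {a b : G'} (hab : a ≠ b) :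
    #(univ.filter fun y => g y = a) + #(univ.filter fun y => g y = b) ≤ Fintype.card G := by
  classical
  rw [← Finset.card_union_of_disjoint]
  · simpa using Finset.card_le_univ _
  · rw [Finset.disjoint_left]
    intro x hx hx'
    simp only [mem_filter] at hx hx'
    exact hab (hx.2 ▸ hx'.2 ▸ rfl)

lemma collision (hC : 9 * Fintype.card G ^ 2 ≤
      10 * #(univ.filter fun p : G × G => f (p.1 * p.2) = f p.1 * f p.2)) (x : G) :
    4 * Fintype.card G ^ 2 ≤ 5 * #(univ.filter fun p : G × G =>
      f (x * p.1) * (f p.1)⁻¹ = f (x * p.2) * (f p.2)⁻¹) := by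
  classical
  set n := Fintype.card G with hn
  set P : G × G → Prop := fun p => f (p.1 * p.2) = f p.1 * f p.2 with hP
  set C := #(univ.filter P) with hCdef
  have hCn : C ≤ n ^ 2 := by
    calc C ≤ #(univ : Finset (G × G)) := Finset.card_le_univ _
    _ = n ^ 2 := by simp [Fintype.card_prod, sq, hn]
  let e1 : (G × G) ≃ (G × G) :=
    ⟨fun p => (x * p.2, p.2⁻¹ * p.1), fun q => (x⁻¹ * q.1 * q.2, x⁻¹ * q.1),
      fun p => by simp [mul_assoc], fun q => by simp [mul_assoc]⟩
  let e2 : (G × G) ≃ (G × G) :=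
    ⟨fun p => (p.2, p.2⁻¹ * p.1), fun q => (q.1 * q.2, q.1),
      fun p => by simp [mul_assoc], fun q => by simp [mul_assoc]⟩
  have hA : #(univ.filter fun p : G × G => P (e1 p)) = C := card_filter_equiv e1 P
  have hB : #(univ.filter fun p : G × G => P (e2 p)) = C := card_filter_equiv e2 P
  have hsub : (univ.filter fun p : G × G => P (e1 p) ∧ P (e2 p)) ⊆
      univ.filter fun p : G × G => f (x * p.1) * (f p.1)⁻¹ = f (x * p.2) * (f p.2)⁻¹ := by
    intro p hp
    simp only [mem_filter, mem_univ, true_and, hP, e1, e2, Equiv.coe_fn_mk] at hp ⊢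
    obtain ⟨h1, h2⟩ := hp
    have hx1 : x * p.2 * (p.2⁻¹ * p.1) = x * p.1 := by group
    have hx2 : p.2 * (p.2⁻¹ * p.1) = p.1 := by group
    rw [hx1] at h1
    rw [hx2] at h2
    rw [h1, h2]
    group
  have htwo := two_bound (fun p : G × G => P (e1 p)) (fun p : G × G => P (e2 p))
  have hcard : Fintype.card (G × G) = n ^ 2 := by simp [Fintype.card_prod, sq, hn]
  have hle := Finset.card_le_card hsub
  omega

lemma majority (x : G)
    (hcol : 4 * Fintype.card G ^ 2 ≤ 5 * #(univ.filter fun p : G × G =>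
      f (x * p.1) * (f p.1)⁻¹ = f (x * p.2) * (f p.2)⁻¹)) :
    ∃! a : G', 4 * Fintype.card G ≤ 5 * Nf f x a := by
  classical
  set n := Fintype.card G with hn
  have npos : 0 < n := Fintype.card_pos
  have hsum : #(univ.filter fun p : G × G =>
      f (x * p.1) * (f p.1)⁻¹ = f (x * p.2) * (f p.2)⁻¹) =
      ∑ y : G, Nf f x (f (x * y) * (f y)⁻¹) :=
    card_pairs_fst (fun y => f (x * y) * (f y)⁻¹)
  have hex : ∃ y : G, 4 * n ≤ 5 * Nf f x (f (x * y) * (f y)⁻¹) := by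
    by_contra hcon
    push_neg at hcon
    have : ∑ y : G, 5 * Nf f x (f (x * y) * (f y)⁻¹) < ∑ _y : G, 4 * n :=
      Finset.sum_lt_sum_of_nonempty univ_nonempty fun y _ => hcon y
    rw [Finset.sum_const, ← Finset.mul_sum] at this
    simp only [Finset.card_univ, ← hn, smul_eq_mul] at this
    rw [hsum] at hcol
    nlinarith
  obtain ⟨y, hy⟩ := hex
  refine ⟨f (x * y) * (f y)⁻¹, hy, ?_⟩
  intro b hb
  by_contra hne
  have := fiber_disjoint (fun z => f (x * z) * (f z)⁻¹) hne
  beta_reduce at this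
  unfold Nf at hy hb
  omega

lemma hom_step (φ₀ : G → G')
    (hmaj : ∀ x : G, 4 * Fintype.card G ≤ 5 * Nf f x (φ₀ x)) (x₁ x₂ : G) :
    φ₀ (x₁ * x₂) = φ₀ x₁ * φ₀ x₂ := by
  classical
  set n := Fintype.card G with hn
  have npos : 0 < n := Fintype.card_pos
  have c1 : #(univ.filter fun y => f (x₁ * (x₂ * y)) * (f (x₂ * y))⁻¹ = φ₀ x₁) =
      Nf f x₁ (φ₀ x₁) := by
    exact card_filter_equiv (Equiv.mulLeft x₂)
      (fun y' => f (x₁ * y') * (f y')⁻¹ = φ₀ x₁)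
  have c2 : #(univ.filter fun y => f (x₂ * y) * (f y)⁻¹ = φ₀ x₂) = Nf f x₂ (φ₀ x₂) := rfl
  have c3 : #(univ.filter fun y => f ((x₁ * x₂) * y) * (f y)⁻¹ = φ₀ (x₁ * x₂)) =
      Nf f (x₁ * x₂) (φ₀ (x₁ * x₂)) := rfl
  have h3b := three_bound (fun y => f (x₁ * (x₂ * y)) * (f (x₂ * y))⁻¹ = φ₀ x₁)
    (fun y => f (x₂ * y) * (f y)⁻¹ = φ₀ x₂)
    (fun y => f ((x₁ * x₂) * y) * (f y)⁻¹ = φ₀ (x₁ * x₂))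
  have hm1 := hmaj x₁
  have hm2 := hmaj x₂
  have hm3 := hmaj (x₁ * x₂)
  have hpos : 0 < #(univ.filter fun y =>
      (f (x₁ * (x₂ * y)) * (f (x₂ * y))⁻¹ = φ₀ x₁) ∧
      (f (x₂ * y) * (f y)⁻¹ = φ₀ x₂) ∧
      (f ((x₁ * x₂) * y) * (f y)⁻¹ = φ₀ (x₁ * x₂))) := by omega
  obtain ⟨y, hy⟩ := Finset.card_pos.mp hpos
  simp only [mem_filter, mem_univ, true_and] at hy
  obtain ⟨h1, h2, h3⟩ := hy
  rw [← h1, ← h2, ← h3, mul_assoc]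
  simp [mul_assoc]

lemma left_maj (hC : 9 * Fintype.card G ^ 2 ≤
      10 * #(univ.filter fun p : G × G => f (p.1 * p.2) = f p.1 * f p.2))
    (φ₀ : G → G') (hmaj : ∀ x : G, 4 * Fintype.card G ≤ 5 * Nf f x (φ₀ x)) (y : G) :
    3 * Fintype.card G ≤ 5 * #(univ.filter fun x => f (x * y) = f x * φ₀ y) := by
  classical
  set n := Fintype.card G with hn
  have npos : 0 < n := Fintype.card_pos
  set P : G × G → Prop := fun p => f (p.1 * p.2) = f p.1 * f p.2 with hP
  set C := #(univ.filter P) with hCdef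
  have cA := card_pairs_right (fun z : G => f (y * z) * (f z)⁻¹ = φ₀ y)
  have cB : #(univ.filter fun p : G × G => f (p.1 * (y * p.2)) = f p.1 * f (y * p.2)) = C := by
    exact card_filter_equiv ((Equiv.refl G).prodCongr (Equiv.mulLeft y)) P
  have cC : #(univ.filter fun p : G × G => f ((p.1 * y) * p.2) = f (p.1 * y) * f p.2) = C := by
    exact card_filter_equiv ((Equiv.mulRight y).prodCongr (Equiv.refl G)) P
  have h3b := three_bound (fun p : G × G => f (y * p.2) * (f p.2)⁻¹ = φ₀ y)
    (fun p : G × G => f (p.1 * (y * p.2)) = f p.1 * f (y * p.2))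
    (fun p : G × G => f ((p.1 * y) * p.2) = f (p.1 * y) * f p.2)
  have hsub : (univ.filter fun p : G × G =>
      (f (y * p.2) * (f p.2)⁻¹ = φ₀ y) ∧
      (f (p.1 * (y * p.2)) = f p.1 * f (y * p.2)) ∧
      (f ((p.1 * y) * p.2) = f (p.1 * y) * f p.2)) ⊆
      univ.filter fun p : G × G => f (p.1 * y) = f p.1 * φ₀ y := by
    intro p hp
    simp only [mem_filter, mem_univ, true_and] at hp ⊢
    obtain ⟨h1, h2, h3⟩ := hp
    rw [mul_inv_eq_iff_eq_mul] at h1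
    rw [h1, ← mul_assoc] at h2
    rw [h2, ← mul_assoc] at h3
    exact (mul_right_cancel h3).symm
  have hle := Finset.card_le_card hsub
  have hcnt := card_pairs_left (fun x : G => f (x * y) = f x * φ₀ y)
  have hcard : Fintype.card (G × G) = n ^ 2 := by simp [Fintype.card_prod, sq, hn]
  have hmy := hmaj y
  set cnt := #(univ.filter fun x => f (x * y) = f x * φ₀ y) with hcnt2
  have cA' : #(univ.filter fun p : G × G => f (y * p.2) * (f p.2)⁻¹ = φ₀ y) =
      n * Nf f y (φ₀ y) := by rw [hn]; exact cA
  have hcnt' : #(univ.filter fun p : G × G => f (p.1 * y) = f p.1 * φ₀ y) = cnt * n := by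
    rw [hn]; exact hcnt
  rw [hcard] at h3b
  have hmul : 2 * n * (4 * n) ≤ 2 * n * (5 * Nf f y (φ₀ y)) := Nat.mul_le_mul_left _ hmy
  have key : 6 * n * n ≤ 10 * cnt * n := by nlinarith [pow_two n]
  have := Nat.le_of_mul_le_mul_right key npos
  omega

end BLRtest

open BLRtest

theorem homomorphism_test
    {G G' : Type*} [Group G] [Group G'] [Finite G] [Finite G']
    (f : G → G')
    (h : 9 * Nat.card G ^ 2 ≤
      10 * Nat.card {p : G × G // f (p.1 * p.2) = f p.1 * f p.2}) :
    ∃! φ : G →* G', 10 * Nat.card {x : G // f x ≠ φ x} ≤ Nat.card G := by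
  classical
  letI : Fintype G := Fintype.ofFinite G
  set n := Fintype.card G with hn
  have npos : 0 < n := Fintype.card_pos
  have hnG : Nat.card G = n := Nat.card_eq_fintype_card
  have hCconv : Nat.card {p : G × G // f (p.1 * p.2) = f p.1 * f p.2} =
      #(univ.filter fun p : G × G => f (p.1 * p.2) = f p.1 * f p.2) := by
    rw [Nat.card_eq_fintype_card, Fintype.card_subtype]
  rw [hnG, hCconv] at h
  -- the majority function
  have maj : ∀ x : G, ∃! a : G', 4 * n ≤ 5 * Nf f x a :=
    fun x => majority f x (collision f h x)
  choose φ₀ hφa hφu using maj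
  have hom := hom_step f φ₀ hφa
  set φ : G →* G' := MonoidHom.mk' φ₀ hom with hφ
  have hφcoe : ∀ x, φ x = φ₀ x := fun x => rfl
  -- generic conversion of Nat.card of the distance set
  have hconv : ∀ ψ : G →* G', Nat.card {x : G // f x ≠ ψ x} =
      #(univ.filter fun x => f x ≠ ψ x) := by
    intro ψ
    rw [Nat.card_eq_fintype_card, Fintype.card_subtype]
  -- closeness of f to φ₀
  set Bset := univ.filter fun x => f x ≠ φ₀ x with hBset
  set b := #Bset with hb
  -- per-row bound
  have hFx : ∀ x : G, f x ≠ φ₀ x →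
      4 * n ≤ 5 * #(univ.filter fun y => ¬(f (x * y) = f x * f y)) := by
    intro x hx
    have hdis := fiber_disjoint (fun y => f (x * y) * (f y)⁻¹) hx
    beta_reduce at hdis
    have hmx := hφa x
    unfold Nf at hmx
    have hcompl := compl_card (fun y : G => f (x * y) = f x * f y)
    have heqN : #(univ.filter fun y => f (x * y) = f x * f y) =
        #(univ.filter fun y => f (x * y) * (f y)⁻¹ = f x) := by
      congr 1
      refine Finset.filter_congr fun y _ => ?_
      simp [mul_inv_eq_iff_eq_mul]
    rw [← hn] at hcompl
    omega
  -- per-column bound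
  have hFy : ∀ y : G, f y ≠ φ₀ y →
      3 * n ≤ 5 * #(univ.filter fun x => ¬(f (x * y) = f x * f y)) := by
    intro y hy
    have hlm := left_maj f h φ₀ hφa y
    have hdis : #(univ.filter fun x => f (x * y) = f x * f y) +
        #(univ.filter fun x => f (x * y) = f x * φ₀ y) ≤ n := by
      rw [← Finset.card_union_of_disjoint]
      · simpa [hn] using Finset.card_le_univ _
      · rw [Finset.disjoint_left]
        intro x hx hx'
        simp only [mem_filter] at hx hx'
        exact hy (mul_left_cancel (hx.2.symm.trans hx'.2))
    have hcompl := compl_card (fun x : G => f (x * y) = f x * f y)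
    rw [← hn] at hcompl
    omega
  -- global counting
  set Fail := univ.filter fun p : G × G => ¬(f (p.1 * p.2) = f p.1 * f p.2) with hFail
  have hFailcard : 10 * #Fail ≤ n ^ 2 := by
    have hcompl := compl_card (fun p : G × G => f (p.1 * p.2) = f p.1 * f p.2)
    rw [← hFail] at hcompl
    have hcard : Fintype.card (G × G) = n ^ 2 := by
      rw [Fintype.card_prod, ← hn, sq]
    omega
  -- F1
  have hF1 := card_pairs_fst_sum Bset (fun p : G × G => ¬(f (p.1 * p.2) = f p.1 * f p.2))
  have hF1low : 4 * n * b ≤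
      5 * #(univ.filter fun p : G × G =>
        ¬(f (p.1 * p.2) = f p.1 * f p.2) ∧ p.1 ∈ Bset) := by
    rw [hF1, Finset.mul_sum]
    calc 4 * n * b = ∑ _x ∈ Bset, 4 * n := by rw [Finset.sum_const, smul_eq_mul]; ring
    _ ≤ ∑ x ∈ Bset, 5 * #(univ.filter fun z => ¬(f (x * z) = f x * f z)) := by
        refine Finset.sum_le_sum fun x hx => ?_
        exact hFx x (by simpa [hBset] using hx)
    _ = ∑ x ∈ Bset, 5 * #(univ.filter fun z =>
        (fun p : G × G => ¬(f (p.1 * p.2) = f p.1 * f p.2)) (x, z)) := rfl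
  have hF2 := card_pairs_snd_sum Bset (fun p : G × G => ¬(f (p.1 * p.2) = f p.1 * f p.2))
  have hF2low : 3 * n * b ≤
      5 * #(univ.filter fun p : G × G =>
        ¬(f (p.1 * p.2) = f p.1 * f p.2) ∧ p.2 ∈ Bset) := by
    rw [hF2, Finset.mul_sum]
    calc 3 * n * b = ∑ _y ∈ Bset, 3 * n := by rw [Finset.sum_const, smul_eq_mul]; ring
    _ ≤ ∑ y ∈ Bset, 5 * #(univ.filter fun z => ¬(f (z * y) = f z * f y)) := by
        refine Finset.sum_le_sum fun y hy => ?_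
        exact hFy y (by simpa [hBset] using hy)
    _ = ∑ y ∈ Bset, 5 * #(univ.filter fun z =>
        (fun p : G × G => ¬(f (p.1 * p.2) = f p.1 * f p.2)) (z, y)) := rfl
  -- inclusion-exclusion
  have hIE := two_bound (fun p : G × G => ¬(f (p.1 * p.2) = f p.1 * f p.2) ∧ p.1 ∈ Bset)
    (fun p : G × G => ¬(f (p.1 * p.2) = f p.1 * f p.2) ∧ p.2 ∈ Bset)
  have hIsub : (univ.filter fun p : G × G =>
      (¬(f (p.1 * p.2) = f p.1 * f p.2) ∧ p.1 ∈ Bset) ∧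
      (¬(f (p.1 * p.2) = f p.1 * f p.2) ∧ p.2 ∈ Bset)) ⊆
      univ.filter fun p : G × G => p.1 ∈ Bset ∧ p.2 ∈ Bset := by
    intro p hp
    simp only [mem_filter, mem_univ, true_and] at hp ⊢
    exact ⟨hp.1.2, hp.2.2⟩
  have hIcard : #(univ.filter fun p : G × G => p.1 ∈ Bset ∧ p.2 ∈ Bset) = b * b := by
    rw [← Finset.univ_product_univ, Finset.filter_product, Finset.card_product]
    simp [hb, Finset.filter_mem_eq_inter]
  -- union ⊆ Fail : both events imply failure; we bound via two_bound on G × G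
  have hsubF1 : (univ.filter fun p : G × G =>
      ¬(f (p.1 * p.2) = f p.1 * f p.2) ∧ p.1 ∈ Bset) ⊆ Fail := by
    intro p hp
    simp only [mem_filter, hFail, mem_univ, true_and] at hp ⊢
    exact hp.1
  have hsubF2 : (univ.filter fun p : G × G =>
      ¬(f (p.1 * p.2) = f p.1 * f p.2) ∧ p.2 ∈ Bset) ⊆ Fail := by
    intro p hp
    simp only [mem_filter, hFail, mem_univ, true_and] at hp ⊢
    exact hp.1
  have hunion : #(univ.filter fun p : G × G =>
        ¬(f (p.1 * p.2) = f p.1 * f p.2) ∧ p.1 ∈ Bset) +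
      #(univ.filter fun p : G × G =>
        ¬(f (p.1 * p.2) = f p.1 * f p.2) ∧ p.2 ∈ Bset) ≤ b * b + #Fail := by
    classical
    have h1 := Finset.card_union_add_card_inter
      (univ.filter fun p : G × G => ¬(f (p.1 * p.2) = f p.1 * f p.2) ∧ p.1 ∈ Bset)
      (univ.filter fun p : G × G => ¬(f (p.1 * p.2) = f p.1 * f p.2) ∧ p.2 ∈ Bset)
    have h2 : (univ.filter fun p : G × G =>
        ¬(f (p.1 * p.2) = f p.1 * f p.2) ∧ p.1 ∈ Bset) ∪
        (univ.filter fun p : G × G =>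
        ¬(f (p.1 * p.2) = f p.1 * f p.2) ∧ p.2 ∈ Bset) ⊆ Fail :=
      Finset.union_subset hsubF1 hsubF2
    have h3 := Finset.card_le_card h2
    have h4 : (univ.filter fun p : G × G =>
        ¬(f (p.1 * p.2) = f p.1 * f p.2) ∧ p.1 ∈ Bset) ∩
        (univ.filter fun p : G × G =>
        ¬(f (p.1 * p.2) = f p.1 * f p.2) ∧ p.2 ∈ Bset) ⊆
        univ.filter fun p : G × G => p.1 ∈ Bset ∧ p.2 ∈ Bset := by
      rw [← Finset.filter_and]
      exact hIsub
    have h5 := Finset.card_le_card h4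
    omega
  have hbn : b ≤ n := by
    calc b ≤ #(univ : Finset G) := Finset.card_le_univ _
    _ = n := by rw [Finset.card_univ]
  -- first bound : 8 b ≤ n
  have h8b : 8 * b ≤ n := by
    have hF1Fail : #(univ.filter fun p : G × G =>
        ¬(f (p.1 * p.2) = f p.1 * f p.2) ∧ p.1 ∈ Bset) ≤ #Fail :=
      Finset.card_le_card hsubF1
    have : 8 * b * n ≤ n * n := by
      linarith only [hF1Fail, hF1low, hFailcard, pow_two n]
    exact Nat.le_of_mul_le_mul_right this npos
  -- main bound : 10 b ≤ n
  have h10b : 10 * b ≤ n := by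
    by_contra hcon
    push_neg at hcon
    have h14 : 14 * n * b ≤ 10 * (b * b) + n * n := by
      linarith only [hF1low, hF2low, hunion, hFailcard, pow_two n]
    have hp1 : (n + 1) * n ≤ (10 * b) * n := Nat.mul_le_mul_right n hcon
    have hp2 : (8 * b) * b ≤ n * b := Nat.mul_le_mul_right b h8b
    exact final_arith n b h14 (by linarith only [hp1]) (by linarith only [hp2]) npos
  -- our homomorphism satisfies the bound
  have hbound : 10 * Nat.card {x : G // f x ≠ φ x} ≤ Nat.card G := by
    rw [hconv φ, hnG]
    have : (univ.filter fun x => f x ≠ φ x) = Bset := by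
      rw [hBset]
      refine Finset.filter_congr fun x _ => ?_
      simp [hφcoe]
    rw [this]
    exact h10b
  refine ⟨φ, hbound, ?_⟩
  -- uniqueness
  intro φ' hφ'
  have hb' : 10 * #(univ.filter fun x => f x ≠ φ' x) ≤ n := by
    rw [hconv φ', hnG] at hφ'
    exact hφ'
  set H : Subgroup G := φ'.eqLocus φ with hH
  have hHcard : Nat.card H = #(univ.filter fun x => φ' x = φ x) := by
    rw [Nat.card_eq_fintype_card, Fintype.card_subtype]
    congr 1
  have hHbig : n < 2 * Nat.card H := by
    have hsubne : (univ.filter fun x => ¬(φ' x = φ x)) ⊆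
        (univ.filter fun x => f x ≠ φ' x) ∪ (univ.filter fun x => f x ≠ φ x) := by
      intro x hx
      simp only [mem_filter, mem_univ, true_and, Finset.mem_union] at hx ⊢
      by_contra hcc
      push_neg at hcc
      exact hx (hcc.1.symm.trans hcc.2)
    have h1 := Finset.card_le_card hsubne
    have h2 := Finset.card_union_le (univ.filter fun x => f x ≠ φ' x)
      (univ.filter fun x => f x ≠ φ x)
    have hcompl := compl_card (fun x : G => φ' x = φ x)
    rw [← hn] at hcompl
    have hbφ : 10 * #(univ.filter fun x => f x ≠ φ x) ≤ n := by
      have : (univ.filter fun x => f x ≠ φ x) = Bset := by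
        rw [hBset]
        refine Finset.filter_congr fun x _ => ?_
        simp [hφcoe]
      rw [this]; exact h10b
    omega
  have hdvd : Nat.card H ∣ Nat.card G := Subgroup.card_subgroup_dvd_card H
  have hcardH : Nat.card G = Nat.card H :=
    Nat.eq_of_dvd_of_lt_two_mul (by omega) hdvd (by omega)
  have hHtop : H = ⊤ := Subgroup.eq_top_of_card_eq H hcardH.symm
  ext x
  have hxH : x ∈ H := hHtop ▸ Subgroup.mem_top x
  exact hxH
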